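/- arXiv:2302.06749 — 3 statements merged into one kernel-verified Lean document; each statement's English description precedes it below -/
import Mathlib

section
/- Let α₁, …, α_{ℓ} be real numbers and s₁, …, s_ℓ, n positive reals such that for each j ∈ [ℓ], sin²α_j = (s_j/n)·∏_{k=1}^{j-1} (sin(3α_k)/sin α_k)², with all sin α_k ≠ 0. Then for each j ∈ [ℓ], sin(3α_j)/sin α_j ≥ 3 - 4·s_j·9^{j-1}/n. -/
open Real Finset

theorem amplification_ratio_lower_bound
    (ℓ : ℕ) (α s : ℕ → ℝ) (n : ℝ) (hn : 0 < n)
    (hs : ∀ j ∈ Finset.Icc 1 ℓ, 0 < s j)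
    (hsin : ∀ k ∈ Finset.Icc 1 ℓ, Real.sin (α k) ≠ 0)
    (hrec : ∀ j ∈ Finset.Icc 1 ℓ,
      Real.sin (α j) ^ 2 =
        s j / n * ∏ k ∈ Finset.Icc 1 (j - 1), (Real.sin (3 * α k) / Real.sin (α k)) ^ 2) :
    ∀ j ∈ Finset.Icc 1 ℓ,
      Real.sin (3 * α j) / Real.sin (α j) ≥ 3 - 4 * s j * 9 ^ (j - 1) / n := by
  have hratio : ∀ k ∈ Finset.Icc 1 ℓ,
      Real.sin (3 * α k) / Real.sin (α k) = 3 - 4 * Real.sin (α k) ^ 2 := by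
    intro k hk
    rw [Real.sin_three_mul]
    field_simp [hsin k hk]
  intro j hj
  obtain ⟨hj1, hjℓ⟩ := Finset.mem_Icc.mp hj
  -- product bound
  have hP : (∏ k ∈ Finset.Icc 1 (j - 1), (Real.sin (3 * α k) / Real.sin (α k)) ^ 2)
      ≤ 9 ^ (j - 1) := by
    calc (∏ k ∈ Finset.Icc 1 (j - 1), (Real.sin (3 * α k) / Real.sin (α k)) ^ 2)
        ≤ ∏ k ∈ Finset.Icc 1 (j - 1), (9 : ℝ) := by
          apply Finset.prod_le_prod
          · intro k _; positivity
          · intro k hk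
            obtain ⟨hk1, hk2⟩ := Finset.mem_Icc.mp hk
            have hkℓ : k ∈ Finset.Icc 1 ℓ :=
              Finset.mem_Icc.mpr ⟨hk1, le_trans hk2 (le_trans (Nat.sub_le j 1) hjℓ)⟩
            rw [hratio k hkℓ]
            have h1 := Real.sin_sq_le_one (α k)
            have h0 := sq_nonneg (Real.sin (α k))
            nlinarith
      _ = 9 ^ (j - 1) := by
          rw [Finset.prod_const, Nat.card_Icc]; norm_num
  have hPnn : (0:ℝ) ≤ ∏ k ∈ Finset.Icc 1 (j - 1), (Real.sin (3 * α k) / Real.sin (α k)) ^ 2 :=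
    Finset.prod_nonneg fun k _ => sq_nonneg _
  have hsq : Real.sin (α j) ^ 2 ≤ s j * 9 ^ (j - 1) / n := by
    rw [hrec j hj]
    have hsj := hs j hj
    have : s j / n * (∏ k ∈ Finset.Icc 1 (j - 1), (Real.sin (3 * α k) / Real.sin (α k)) ^ 2)
        ≤ s j / n * 9 ^ (j - 1) :=
      mul_le_mul_of_nonneg_left hP (by positivity)
    linarith [this, (by ring : s j / n * (9:ℝ) ^ (j-1) = s j * 9 ^ (j-1) / n)]
  rw [hratio j hj]
  have : 4 * s j * 9 ^ (j - 1) / n = 4 * (s j * 9 ^ (j - 1) / n) := by ring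
  linarith
end

section
/- Let n = s₀ ≥ s₁ ≥ ⋯ ≥ s_d = m be nonnegative integers, and let ℓ ∈ [1,d] satisfy 9^{ℓ-1} ≤ n/m ≤ 9^ℓ (with m ≥ 1). If ∑_{k=1}^{d-1} 9^k (s_k − s_{k+1}) < n, then ∑_{j=1}^{ℓ-1} 9^j s_j < 9n/4. -/
open Finset

private lemma tele_sum (f : ℕ → ℝ) (a : ℕ) : ∀ b, a ≤ b →
    ∑ k ∈ Finset.Ico a b, (f k - f (k + 1)) = f a - f b := by
  intro b hb
  induction b, hb using Nat.le_induction with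
  | base => simp
  | succ b hb ih =>
    rw [Finset.sum_Ico_succ_top hb, ih]
    ring

private lemma key_ident (f : ℕ → ℝ) (L : ℕ) :
    ∑ k ∈ Finset.Ico 1 (L + 1), (9 : ℝ) ^ k * (f k - f (k + 1)) =
      (8 / 9) * ∑ j ∈ Finset.Ico 1 (L + 1), (9 : ℝ) ^ j * f j
        + f 1 - 9 ^ L * f (L + 1) := by
  induction L with
  | zero => simp
  | succ L ih =>
    rw [Finset.sum_Ico_succ_top (by omega : 1 ≤ L + 1),
        Finset.sum_Ico_succ_top (by omega : 1 ≤ L + 1), mul_add, ih]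
    ring

theorem key_combinatorial_lemma (d ℓ n m : ℕ) (s : ℕ → ℕ)
    (hs0 : s 0 = n) (hsd : s d = m)
    (hmono : ∀ k, k < d → s (k + 1) ≤ s k)
    (hm : 1 ≤ m) (hℓ1 : 1 ≤ ℓ) (hℓd : ℓ ≤ d)
    (hlow : 9 ^ (ℓ - 1) * m ≤ n) (hhigh : n ≤ 9 ^ ℓ * m)
    (hbudget : ∑ k ∈ Finset.Icc 1 (d - 1), (9 : ℝ) ^ k * ((s k : ℝ) - s (k + 1)) < n) :
    ∑ j ∈ Finset.Icc 1 (ℓ - 1), (9 : ℝ) ^ j * s j < 9 * n / 4 := by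
  obtain ⟨L, rfl⟩ : ∃ L, ℓ = L + 1 := ⟨ℓ - 1, by omega⟩
  have hL : L + 1 - 1 = L := by omega
  rw [hL] at hlow ⊢
  have hd1 : 1 ≤ d := le_trans hℓ1 hℓd
  -- s (L+1) ≥ m
  have hstep : ∀ t, L + 1 + t ≤ d → s (L + 1 + t) ≤ s (L + 1) := by
    intro t
    induction t with
    | zero => simp
    | succ t ih =>
      intro h
      have : L + 1 + (t + 1) = (L + 1 + t) + 1 := by omega
      rw [this]
      exact le_trans (hmono _ (by omega)) (ih (by omega))
  have hsl : (m : ℝ) ≤ (s (L + 1) : ℝ) := by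
    have h := hstep (d - (L + 1)) (by omega)
    rw [(by omega : L + 1 + (d - (L + 1)) = d), hsd] at h
    exact_mod_cast h
  have hfnn : ∀ k, k < d → 0 ≤ (s k : ℝ) - (s (k + 1) : ℝ) := by
    intro k hk
    have := hmono k hk
    rw [sub_nonneg]
    exact_mod_cast this
  -- rewrite Icc as Ico
  have hIcc1 : Finset.Icc 1 (d - 1) = Finset.Ico 1 d := by
    rw [← Finset.Ico_add_one_right_eq_Icc]; congr 1; omega
  have hIcc2 : Finset.Icc 1 L = Finset.Ico 1 (L + 1) := by
    rw [← Finset.Ico_add_one_right_eq_Icc]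
  rw [hIcc1] at hbudget
  rw [hIcc2]
  -- split budget at ℓ = L + 1
  have hsplit : ∑ k ∈ Finset.Ico 1 (L + 1), (9 : ℝ) ^ k * ((s k : ℝ) - s (k + 1))
      + ∑ k ∈ Finset.Ico (L + 1) d, (9 : ℝ) ^ k * ((s k : ℝ) - s (k + 1))
      = ∑ k ∈ Finset.Ico 1 d, (9 : ℝ) ^ k * ((s k : ℝ) - s (k + 1)) :=
    Finset.sum_Ico_consecutive _ (by omega) hℓd
  -- B1 identity
  have hB1 := key_ident (fun k => (s k : ℝ)) L
  -- B2 lower bound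
  have hB2 : 9 * (9 : ℝ) ^ L * ((s (L + 1) : ℝ) - m)
      ≤ ∑ k ∈ Finset.Ico (L + 1) d, (9 : ℝ) ^ k * ((s k : ℝ) - s (k + 1)) := by
    have ht := tele_sum (fun k => (s k : ℝ)) (L + 1) d hℓd
    rw [hsd] at ht
    rw [(by ring : (9 : ℝ) * 9 ^ L = 9 ^ (L + 1)), ← ht, Finset.mul_sum]
    apply Finset.sum_le_sum
    intro k hk
    simp only [Finset.mem_Ico] at hk
    have h1 : (9 : ℝ) ^ (L + 1) ≤ 9 ^ k :=
      pow_le_pow_right₀ (by norm_num) hk.1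
    exact mul_le_mul_of_nonneg_right h1 (hfnn k hk.2)
  have hlowR : (9 : ℝ) ^ L * m ≤ n := by exact_mod_cast hlow
  have hf1 : (0 : ℝ) ≤ (s 1 : ℝ) := by positivity
  have hpow : (0 : ℝ) < 9 ^ L := by positivity
  have hprod : (9 : ℝ) ^ L * m ≤ 9 ^ L * s (L + 1) :=
    mul_le_mul_of_nonneg_left hsl (le_of_lt hpow)
  nlinarith [hbudget, hsplit, hB1, hB2, hprod, hlowR, hf1]
end

section
/- Let 0 = T₀ < T₁ < ⋯ < T_d with T_j = 3^{j}·√(T/n)·3 (i.e., T_j = 3^j T₁ with T₁ = 3√(T/n)), t : [n] → ℝ₊ with ∑ t_i² ≤ T, x ∈ {0,1}^n, and S_j, s_j = |S_j| as above with S_d = {i : x_i = 1}. Then (T/n)·∑_{j=2}^{d} 9^{j-1}·|S_{j-1} \ S_j| < T, and hence ∑_{k=1}^{d-1} 9^k (s_k − s_{k+1}) < n. -/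
open Finset

theorem budget_inequality (n d : ℕ) (hn : 0 < n) (hd : 1 ≤ d) (T : ℝ)
    (Ts : ℕ → ℝ) (hTs0 : Ts 0 = 0)
    (hTs : ∀ j, 1 ≤ j → Ts j = 3 ^ j * Real.sqrt (T / n))
    (t : Fin n → ℝ) (ht : ∀ i, 0 < t i) (hsum : ∑ i, t i ^ 2 ≤ T)
    (x : Fin n → Bool) (S : ℕ → Finset (Fin n))
    (hS : ∀ j, S j = Finset.univ.filter
      (fun i => Ts j < t i ∨ (t i ≤ Ts j ∧ x i = true)))
    (hSd : S d = Finset.univ.filter (fun i => x i = true)) :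
    T / n * ∑ j ∈ Finset.Icc 2 d, (9 : ℝ) ^ (j - 1) * ((S (j - 1) \ S j).card : ℝ) < T ∧
      ∑ k ∈ Finset.Icc 1 (d - 1), (9 : ℝ) ^ k * (((S k).card : ℝ) - ((S (k + 1)).card : ℝ))
        < n := by
  have hn' : (0:ℝ) < n := by exact_mod_cast hn
  have hT : 0 < T := by
    refine lt_of_lt_of_le ?_ hsum
    refine Finset.sum_pos (fun i _ => pow_pos (ht i) 2) ⟨⟨0, hn⟩, mem_univ _⟩
  have hc : 0 < T / n := div_pos hT hn'
  have hsq : Real.sqrt (T / n) ^ 2 = T / n := Real.sq_sqrt hc.le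
  have hTs_succ : ∀ j, Ts j ≤ Ts (j + 1) := by
    intro j
    cases j with
    | zero =>
      rw [hTs0, hTs 1 le_rfl]
      positivity
    | succ k =>
      rw [hTs _ (by omega), hTs _ (by omega)]
      refine mul_le_mul_of_nonneg_right ?_ (Real.sqrt_nonneg _)
      exact pow_le_pow_right₀ (by norm_num) (by omega)
  have hTs_mono : ∀ a b : ℕ, a ≤ b → Ts a ≤ Ts b := fun a b h =>
    monotone_nat_of_le_succ hTs_succ h
  have hsub : ∀ j, S (j + 1) ⊆ S j := by
    intro j i hi
    rw [hS] at hi ⊢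
    simp only [mem_filter, mem_univ, true_and] at hi ⊢
    rcases hi with h | ⟨h, hx⟩
    · left; exact lt_of_le_of_lt (hTs_succ j) h
    · by_cases h2 : Ts j < t i
      · left; exact h2
      · right; exact ⟨le_of_not_gt h2, hx⟩
  have hanti : ∀ a b : ℕ, a ≤ b → S b ⊆ S a := by
    intro a b h
    induction b with
    | zero => simp_all
    | succ k ih =>
      rcases Nat.lt_or_ge a (k+1) with h2 | h2
      · exact (hsub k).trans (ih (by omega))
      · have : a = k + 1 := by omega
        subst this; exact fun _ hh => hh
  have hkey : ∀ j, 2 ≤ j → ∀ i ∈ S (j - 1) \ S j, T / n * 9 ^ (j - 1) < t i ^ 2 := by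
    intro j hj i hi
    rw [Finset.mem_sdiff, hS (j-1), hS j] at hi
    simp only [mem_filter, mem_univ, true_and, not_or, not_and, not_lt] at hi
    obtain ⟨hmem, hle, hxf⟩ := hi
    have hxfalse : ¬ (x i = true) := hxf (hle)
    have hlt : Ts (j - 1) < t i := by
      rcases hmem with h | ⟨_, hx⟩
      · exact h
      · exact absurd hx hxfalse
    have h0 : 0 ≤ Ts (j - 1) := by
      rw [hTs _ (by omega)]; positivity
    have h2 : Ts (j - 1) ^ 2 < t i ^ 2 := by
      exact pow_lt_pow_left₀ hlt h0 (by norm_num)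
    have h9 : (9:ℝ) ^ (j - 1) = ((3:ℝ) ^ (j - 1)) ^ 2 := by
      rw [← pow_mul, mul_comm, pow_mul]; norm_num
    calc T / n * 9 ^ (j - 1) = Ts (j - 1) ^ 2 := by
          rw [hTs _ (by omega), mul_pow, hsq, h9]; ring
      _ < t i ^ 2 := h2
  have hdisj : ∀ a ∈ Finset.Icc 2 d, ∀ b ∈ Finset.Icc 2 d, a ≠ b →
      Disjoint (S (a - 1) \ S a) (S (b - 1) \ S b) := by
    have key : ∀ a b : ℕ, 2 ≤ a → a < b →
        Disjoint (S (a - 1) \ S a) (S (b - 1) \ S b) := by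
      intro a b ha hab
      have hsub2 : S (b - 1) \ S b ⊆ S a :=
        (Finset.sdiff_subset).trans (hanti a (b-1) (by omega))
      exact (Finset.sdiff_disjoint).mono_right hsub2
    intro a ha b hb hab
    simp only [Finset.mem_Icc] at ha hb
    rcases lt_or_gt_of_ne hab with h | h
    · exact key a b ha.1 h
    · exact (key b a hb.1 h).symm
  have hmain : T / n * ∑ j ∈ Finset.Icc 2 d,
      (9 : ℝ) ^ (j - 1) * ((S (j - 1) \ S j).card : ℝ) < T := by
    rw [Finset.mul_sum]
    have hterm_le : ∀ j ∈ Finset.Icc 2 d,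
        T / n * ((9:ℝ) ^ (j-1) * ((S (j-1) \ S j).card : ℝ)) ≤
          ∑ i ∈ S (j-1) \ S j, t i ^ 2 := by
      intro j hj
      simp only [Finset.mem_Icc] at hj
      have : T / n * ((9:ℝ) ^ (j-1) * ((S (j-1) \ S j).card : ℝ)) =
          ∑ _i ∈ S (j-1) \ S j, T / n * 9 ^ (j-1) := by
        rw [Finset.sum_const, nsmul_eq_mul]; ring
      rw [this]
      exact Finset.sum_le_sum (fun i hi => (hkey j hj.1 i hi).le)
    have htail : ∑ j ∈ Finset.Icc 2 d, ∑ i ∈ S (j-1) \ S j, t i ^ 2 ≤ T := by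
      rw [← Finset.sum_biUnion hdisj]
      refine le_trans (Finset.sum_le_sum_of_subset_of_nonneg (Finset.subset_univ _)
        (fun i _ _ => sq_nonneg _)) hsum
    by_cases hcase : ∀ j ∈ Finset.Icc 2 d, (S (j-1) \ S j) = ∅
    · have : ∑ j ∈ Finset.Icc 2 d,
          T / n * ((9:ℝ) ^ (j-1) * ((S (j-1) \ S j).card : ℝ)) = 0 := by
        refine Finset.sum_eq_zero (fun j hj => ?_)
        rw [hcase j hj]; simp
      rw [this]; exact hT
    · push_neg at hcase
      obtain ⟨j0, hj0, hne⟩ := hcase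
      have hstrict : T / n * ((9:ℝ) ^ (j0-1) * ((S (j0-1) \ S j0).card : ℝ)) <
          ∑ i ∈ S (j0-1) \ S j0, t i ^ 2 := by
        simp only [Finset.mem_Icc] at hj0
        have : T / n * ((9:ℝ) ^ (j0-1) * ((S (j0-1) \ S j0).card : ℝ)) =
            ∑ _i ∈ S (j0-1) \ S j0, T / n * 9 ^ (j0-1) := by
          rw [Finset.sum_const, nsmul_eq_mul]; ring
        rw [this]
        exact Finset.sum_lt_sum_of_nonempty hne
          (fun i hi => hkey j0 hj0.1 i hi)
      calc ∑ j ∈ Finset.Icc 2 d, T / n * ((9:ℝ) ^ (j-1) * ((S (j-1) \ S j).card : ℝ))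
          < ∑ j ∈ Finset.Icc 2 d, ∑ i ∈ S (j-1) \ S j, t i ^ 2 :=
            Finset.sum_lt_sum (fun j hj => hterm_le j hj) ⟨j0, hj0, hstrict⟩
        _ ≤ T := htail
  refine ⟨hmain, ?_⟩
  have hcard : ∀ k : ℕ, ((S k).card : ℝ) - ((S (k+1)).card : ℝ) =
      ((S k \ S (k+1)).card : ℝ) := by
    intro k
    rw [Finset.card_sdiff_of_subset (hsub k), Nat.cast_sub (Finset.card_le_card (hsub k))]
  have heq : ∑ k ∈ Finset.Icc 1 (d-1), (9:ℝ) ^ k * (((S k).card : ℝ) - ((S (k+1)).card : ℝ))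
      = ∑ j ∈ Finset.Icc 2 d, (9:ℝ) ^ (j-1) * ((S (j-1) \ S j).card : ℝ) := by
    refine Finset.sum_nbij' (fun k => k + 1) (fun j => j - 1) ?_ ?_ ?_ ?_ ?_
    · intro k hk; simp only [Finset.mem_Icc] at hk ⊢; omega
    · intro j hj; simp only [Finset.mem_Icc] at hj ⊢; omega
    · intro k hk; simp only [Finset.mem_Icc] at hk; omega
    · intro j hj; simp only [Finset.mem_Icc] at hj; omega
    · intro k hk
      simp only [Nat.add_sub_cancel]
      rw [hcard k]
  rw [heq]
  have h2 : T / n * (∑ j ∈ Finset.Icc 2 d, (9:ℝ) ^ (j-1) * ((S (j-1) \ S j).card : ℝ))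
      < T / n * n := by
    rw [div_mul_cancel₀ T (ne_of_gt hn')]; exact hmain
  exact (mul_lt_mul_iff_right₀ hc).mp h2
end
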